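/- Let P ⊆ Im(O') be a spacelike cross-closed 3-plane. The map sending a pair ([u], v), where [u] is a line in P with unit representative u (q(u) = 1) and v ∈ P⊥ with q(v) = −1, to the line ℝ(u + u×v), is well defined (independent of the choice of unit representative ±u of [u]) and is a bijection from {lines in P} × {v ∈ P⊥ : q(v) = −1} onto the set of isotropic lines of Im(O'). -/

import Mathlib

noncomputable section

open Quaternion

/-- The split octonions `𝕆' = ℍ × ℍ`. -/
abbrev SplitOct : Type := ℍ[ℝ] × ℍ[ℝ]

namespace SplitOct

/-- Split octonion multiplication `(a,b)(c,d) = (ac + d̄b, da + bc̄)`. -/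
def mul (x y : SplitOct) : SplitOct :=
  (x.1 * y.1 + star y.2 * x.2, y.2 * x.1 + x.2 * star y.1)

/-- Split octonion conjugation `(a,b)* = (ā, −b)`. -/
def conj (x : SplitOct) : SplitOct := (star x.1, -x.2)

lemma conj_add (x y : SplitOct) : conj (x + y) = conj x + conj y := by
  simp only [conj, Prod.fst_add, Prod.snd_add, star_add, Prod.mk_add_mk, neg_add]

lemma conj_neg (x : SplitOct) : conj (-x) = -conj x := by
  simp [conj, Prod.ext_iff]

lemma conj_sub (x y : SplitOct) : conj (x - y) = conj x - conj y := by
  rw [sub_eq_add_neg, conj_add, conj_neg, ← sub_eq_add_neg]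

lemma conj_smul (r : ℝ) (x : SplitOct) : conj (r • x) = r • conj x := by
  simp [conj, Prod.ext_iff]

lemma conj_conj (x : SplitOct) : conj (conj x) = x := by
  simp [conj]

lemma conj_zero : conj 0 = 0 := by
  simp [conj, Prod.ext_iff]

/-- The imaginary split octonions `Im 𝕆' = {x | x* = −x}`. -/
def Im : Submodule ℝ SplitOct where
  carrier := {x | conj x = -x}
  add_mem' := by
    intro a b ha hb
    simp only [Set.mem_setOf_eq] at ha hb ⊢
    rw [conj_add, ha, hb, neg_add]
  zero_mem' := by
    simp only [Set.mem_setOf_eq, conj_zero, neg_zero]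
  smul_mem' := by
    intro r a ha
    simp only [Set.mem_setOf_eq] at ha ⊢
    rw [conj_smul, ha, smul_neg]

lemma mem_Im_iff {x : SplitOct} : x ∈ Im ↔ conj x = -x := Iff.rfl

/-- `q x = x·x*`, read as a real number (its values lie in `ℝ·1 ≅ ℝ`). -/
def q (x : SplitOct) : ℝ := (mul x (conj x)).1.re

/-- The polarization `⟨x,y⟩` of the quadratic form `q`. -/
def polar (x y : SplitOct) : ℝ := (q (x + y) - q x - q y) / 2

/-- The cross product `x × y = (xy − (xy)*)/2`. -/
def cross (x y : SplitOct) : SplitOct := (2 : ℝ)⁻¹ • (mul x y - conj (mul x y))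

/-- The scalar triple product `Ω(u,v,w) = ⟨u×v, w⟩`. -/
def triple (u v w : SplitOct) : ℝ := polar (cross u v) w

lemma q_apply (x : SplitOct) : q x = normSq x.1 - normSq x.2 := by
  simp only [q, mul, conj, star_neg, neg_mul, Quaternion.self_mul_star, Quaternion.star_mul_self,
    Quaternion.re_add, Quaternion.re_neg, Quaternion.re_coe]
  ring

lemma polar_apply (x y : SplitOct) :
    polar x y = (x.1 * star y.1).re - (x.2 * star y.2).re := by
  simp only [polar, q_apply, Prod.fst_add, Prod.snd_add, Quaternion.normSq_def',
    Quaternion.re_mul, Quaternion.re_add, Quaternion.imI_add, Quaternion.imJ_add,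
    Quaternion.imK_add, Quaternion.re_star, Quaternion.imI_star, Quaternion.imJ_star,
    Quaternion.imK_star]
  ring

lemma polar_add_left (x x' y : SplitOct) : polar (x + x') y = polar x y + polar x' y := by
  simp only [polar_apply, Prod.fst_add, Prod.snd_add, add_mul, Quaternion.re_add]
  ring

lemma polar_add_right (x y y' : SplitOct) : polar x (y + y') = polar x y + polar x y' := by
  simp only [polar_apply, Prod.fst_add, Prod.snd_add, star_add, mul_add, Quaternion.re_add]
  ring

lemma polar_smul_left (r : ℝ) (x y : SplitOct) : polar (r • x) y = r * polar x y := by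
  simp only [polar_apply, Prod.smul_fst, Prod.smul_snd, smul_mul_assoc, Quaternion.re_smul,
    smul_eq_mul]
  ring

lemma polar_smul_right (r : ℝ) (x y : SplitOct) : polar x (r • y) = r * polar x y := by
  simp only [polar_apply, Prod.smul_fst, Prod.smul_snd, Quaternion.star_smul,
    mul_smul_comm, Quaternion.re_smul, smul_eq_mul]
  ring

lemma polar_zero_left (y : SplitOct) : polar 0 y = 0 := by
  simp [polar_apply]

lemma polar_zero_right (x : SplitOct) : polar x 0 = 0 := by
  simp [polar_apply]

lemma mul_add_left (x x' y : SplitOct) : mul (x + x') y = mul x y + mul x' y := by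
  simp only [mul, Prod.fst_add, Prod.snd_add, add_mul, mul_add, Prod.mk_add_mk, Prod.mk.injEq]
  constructor <;> abel

lemma mul_add_right (x y y' : SplitOct) : mul x (y + y') = mul x y + mul x y' := by
  simp only [mul, Prod.fst_add, Prod.snd_add, star_add, add_mul, mul_add, Prod.mk_add_mk,
    Prod.mk.injEq]
  constructor <;> abel

lemma mul_smul_left (r : ℝ) (x y : SplitOct) : mul (r • x) y = r • mul x y := by
  simp only [mul, Prod.smul_fst, Prod.smul_snd, smul_mul_assoc, mul_smul_comm, Prod.smul_mk,
    smul_add]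

lemma mul_smul_right (r : ℝ) (x y : SplitOct) : mul x (r • y) = r • mul x y := by
  simp only [mul, Prod.smul_fst, Prod.smul_snd, Quaternion.star_smul, smul_mul_assoc,
    mul_smul_comm, Prod.smul_mk, smul_add]

lemma mul_zero_left (y : SplitOct) : mul 0 y = 0 := by
  simp [mul, Prod.ext_iff]

lemma mul_zero_right (x : SplitOct) : mul x 0 = 0 := by
  simp [mul, Prod.ext_iff]

lemma cross_add_left (x x' y : SplitOct) : cross (x + x') y = cross x y + cross x' y := by
  rw [cross, cross, cross, mul_add_left, conj_add]
  module

lemma cross_add_right (x y y' : SplitOct) : cross x (y + y') = cross x y + cross x y' := by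
  rw [cross, cross, cross, mul_add_right, conj_add]
  module

lemma cross_smul_left (r : ℝ) (x y : SplitOct) : cross (r • x) y = r • cross x y := by
  rw [cross, cross, mul_smul_left, conj_smul]
  module

lemma cross_smul_right (r : ℝ) (x y : SplitOct) : cross x (r • y) = r • cross x y := by
  rw [cross, cross, mul_smul_right, conj_smul]
  module

lemma cross_zero_left (y : SplitOct) : cross 0 y = 0 := by
  simp [cross, mul_zero_left, conj_zero]

lemma cross_zero_right (x : SplitOct) : cross x 0 = 0 := by
  simp [cross, mul_zero_right, conj_zero]

lemma cross_mem_Im (x y : SplitOct) : cross x y ∈ Im := by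
  rw [mem_Im_iff, cross, conj_smul, conj_sub, conj_conj]
  module

lemma triple_add₁ (u u' v w : SplitOct) :
    triple (u + u') v w = triple u v w + triple u' v w := by
  rw [triple, triple, triple, cross_add_left, polar_add_left]

lemma triple_add₂ (u v v' w : SplitOct) :
    triple u (v + v') w = triple u v w + triple u v' w := by
  rw [triple, triple, triple, cross_add_right, polar_add_left]

lemma triple_add₃ (u v w w' : SplitOct) :
    triple u v (w + w') = triple u v w + triple u v w' :=
  polar_add_right _ _ _

lemma triple_smul₁ (r : ℝ) (u v w : SplitOct) : triple (r • u) v w = r * triple u v w := by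
  rw [triple, triple, cross_smul_left, polar_smul_left]

lemma triple_smul₂ (r : ℝ) (u v w : SplitOct) : triple u (r • v) w = r * triple u v w := by
  rw [triple, triple, cross_smul_right, polar_smul_left]

lemma triple_smul₃ (r : ℝ) (u v w : SplitOct) : triple u v (r • w) = r * triple u v w :=
  polar_smul_right _ _ _

lemma triple_zero₁ (v w : SplitOct) : triple 0 v w = 0 := by
  rw [triple, cross_zero_left, polar_zero_left]

lemma triple_zero₂ (u w : SplitOct) : triple u 0 w = 0 := by
  rw [triple, cross_zero_right, polar_zero_left]

lemma triple_zero₃ (u v : SplitOct) : triple u v 0 = 0 :=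
  polar_zero_right _

/-- The orthogonal complement of `P` inside the imaginary split octonions. -/
def orth (P : Submodule ℝ SplitOct) : Submodule ℝ SplitOct where
  carrier := {x | x ∈ Im ∧ ∀ y ∈ P, polar x y = 0}
  add_mem' := by
    rintro a b ⟨ha1, ha2⟩ ⟨hb1, hb2⟩
    exact ⟨Im.add_mem ha1 hb1, fun y hy => by
      rw [polar_add_left, ha2 y hy, hb2 y hy, add_zero]⟩
  zero_mem' := ⟨Im.zero_mem, fun y _ => polar_zero_left y⟩
  smul_mem' := by
    rintro r a ⟨ha1, ha2⟩
    exact ⟨Im.smul_mem r ha1, fun y hy => by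
      rw [polar_smul_left, ha2 y hy, mul_zero]⟩

/-- The annihilator `Ann x = {v ∈ Im 𝕆' | x × v = 0}`. -/
def Ann (x : SplitOct) : Submodule ℝ SplitOct where
  carrier := {v | v ∈ Im ∧ cross x v = 0}
  add_mem' := by
    rintro a b ⟨ha1, ha2⟩ ⟨hb1, hb2⟩
    exact ⟨Im.add_mem ha1 hb1, by rw [cross_add_right, ha2, hb2, add_zero]⟩
  zero_mem' := ⟨Im.zero_mem, cross_zero_right x⟩
  smul_mem' := by
    rintro r a ⟨ha1, ha2⟩
    exact ⟨Im.smul_mem r ha1, by rw [cross_smul_right, ha2, smul_zero]⟩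

/-- An isotropic line of `Im 𝕆'`. -/
def IsIsotropicLine (ℓ : Submodule ℝ SplitOct) : Prop :=
  ∃ x, x ∈ Im ∧ x ≠ 0 ∧ q x = 0 ∧ ℓ = Submodule.span ℝ {x}

/-- An annihilator photon: a 2-dimensional totally isotropic subspace of `Im 𝕆'`
on which the cross product vanishes identically. -/
def IsAnnihilatorPhoton (ω : Submodule ℝ SplitOct) : Prop :=
  ω ≤ Im ∧ Module.finrank ℝ ω = 2 ∧ (∀ x ∈ ω, q x = 0) ∧
    ∀ x ∈ ω, ∀ y ∈ ω, cross x y = 0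


lemma mem_Im_iff_re {x : SplitOct} : x ∈ Im ↔ x.1.re = 0 := by
  rw [mem_Im_iff]
  constructor
  · intro h
    have h1 : star x.1 = -x.1 := congrArg Prod.fst h
    have := congrArg QuaternionAlgebra.re h1
    simp at this
    linarith
  · intro h
    have : star x.1 = -x.1 := by
      ext <;> simp [h]
    simp [conj, Prod.ext_iff, this]

lemma polar_comm (x y : SplitOct) : polar x y = polar y x := by
  simp only [polar_apply, Quaternion.re_mul, Quaternion.re_star, Quaternion.imI_star,
    Quaternion.imJ_star, Quaternion.imK_star]
  ring

lemma polar_self (x : SplitOct) : polar x x = q x := by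
  simp only [polar_apply, q_apply, Quaternion.normSq_def', Quaternion.re_mul,
    Quaternion.re_star, Quaternion.imI_star, Quaternion.imJ_star, Quaternion.imK_star]
  ring

lemma q_add (x y : SplitOct) : q (x + y) = q x + q y + 2 * polar x y := by
  simp only [polar]; ring

section coords

set_option maxHeartbeats 1000000

-- I1: ⟨u×v, u⟩ = 0 for u v ∈ Im
lemma polar_cross_left (u v : SplitOct) (hu : u ∈ Im) (hv : v ∈ Im) :
    polar (cross u v) u = 0 := by
  rw [mem_Im_iff_re] at hu hv
  obtain ⟨a, b⟩ := u
  obtain ⟨c, d⟩ := v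
  simp only at hu hv
  simp only [cross, mul, conj, polar_apply, Prod.smul_fst, Prod.smul_snd, Prod.fst_sub,
    Prod.snd_sub, Quaternion.re_smul, Quaternion.imI_smul, Quaternion.imJ_smul,
    Quaternion.imK_smul, Quaternion.re_mul, Quaternion.imI_mul, Quaternion.imJ_mul,
    Quaternion.imK_mul, Quaternion.re_star, Quaternion.imI_star, Quaternion.imJ_star,
    Quaternion.imK_star, Quaternion.re_add, Quaternion.imI_add, Quaternion.imJ_add,
    Quaternion.imK_add, Quaternion.re_sub, Quaternion.imI_sub, Quaternion.imJ_sub,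
    Quaternion.imK_sub, Quaternion.re_neg, Quaternion.imI_neg, Quaternion.imJ_neg,
    Quaternion.imK_neg, smul_eq_mul, hu, hv]
  ring

-- I2: q(u×v) = q u q v − ⟨u,v⟩²
lemma q_cross (u v : SplitOct) (hu : u ∈ Im) (hv : v ∈ Im) :
    q (cross u v) = q u * q v - (polar u v)^2 := by
  rw [mem_Im_iff_re] at hu hv
  obtain ⟨a, b⟩ := u
  obtain ⟨c, d⟩ := v
  simp only at hu hv
  simp only [cross, mul, conj, polar_apply, q_apply, Quaternion.normSq_def', Prod.smul_fst,
    Prod.smul_snd, Prod.fst_sub,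
    Prod.snd_sub, Quaternion.re_smul, Quaternion.imI_smul, Quaternion.imJ_smul,
    Quaternion.imK_smul, Quaternion.re_mul, Quaternion.imI_mul, Quaternion.imJ_mul,
    Quaternion.imK_mul, Quaternion.re_star, Quaternion.imI_star, Quaternion.imJ_star,
    Quaternion.imK_star, Quaternion.re_add, Quaternion.imI_add, Quaternion.imJ_add,
    Quaternion.imK_add, Quaternion.re_sub, Quaternion.imI_sub, Quaternion.imJ_sub,
    Quaternion.imK_sub, Quaternion.re_neg, Quaternion.imI_neg, Quaternion.imJ_neg,
    Quaternion.imK_neg, smul_eq_mul, hu, hv]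
  ring

-- I3: u×(u×v) = ⟨u,v⟩ u − q(u) v
lemma cross_cross_self (u v : SplitOct) (hu : u ∈ Im) (hv : v ∈ Im) :
    cross u (cross u v) = polar u v • u - q u • v := by
  rw [mem_Im_iff_re] at hu hv
  obtain ⟨a, b⟩ := u
  obtain ⟨c, d⟩ := v
  simp only at hu hv
  ext <;>
  simp only [cross, mul, conj, polar_apply, q_apply, Quaternion.normSq_def',
    Prod.smul_fst, Prod.smul_snd, Prod.fst_sub, Prod.snd_sub,
    Quaternion.re_smul, Quaternion.imI_smul, Quaternion.imJ_smul,
    Quaternion.imK_smul, Quaternion.re_mul, Quaternion.imI_mul, Quaternion.imJ_mul,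
    Quaternion.imK_mul, Quaternion.re_star, Quaternion.imI_star, Quaternion.imJ_star,
    Quaternion.imK_star, Quaternion.re_add, Quaternion.imI_add, Quaternion.imJ_add,
    Quaternion.imK_add, Quaternion.re_sub, Quaternion.imI_sub, Quaternion.imJ_sub,
    Quaternion.imK_sub, Quaternion.re_neg, Quaternion.imI_neg, Quaternion.imJ_neg,
    Quaternion.imK_neg, smul_eq_mul, hu, hv] <;>
  ring

-- I5: cyclic symmetry of triple product on Im
lemma triple_cyclic (u v w : SplitOct) (hu : u ∈ Im) (hv : v ∈ Im) (hw : w ∈ Im) :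
    triple u v w = triple w u v := by
  rw [mem_Im_iff_re] at hu hv hw
  obtain ⟨a, b⟩ := u
  obtain ⟨c, d⟩ := v
  obtain ⟨e, f⟩ := w
  simp only at hu hv hw
  simp only [triple, cross, mul, conj, polar_apply, Prod.smul_fst,
    Prod.smul_snd, Prod.fst_sub, Prod.snd_sub,
    Quaternion.re_smul, Quaternion.imI_smul, Quaternion.imJ_smul,
    Quaternion.imK_smul, Quaternion.re_mul, Quaternion.imI_mul, Quaternion.imJ_mul,
    Quaternion.imK_mul, Quaternion.re_star, Quaternion.imI_star, Quaternion.imJ_star,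
    Quaternion.imK_star, Quaternion.re_add, Quaternion.imI_add, Quaternion.imJ_add,
    Quaternion.imK_add, Quaternion.re_sub, Quaternion.imI_sub, Quaternion.imJ_sub,
    Quaternion.imK_sub, Quaternion.re_neg, Quaternion.imI_neg, Quaternion.imJ_neg,
    Quaternion.imK_neg, smul_eq_mul, hu, hv, hw]
  ring

end coords
lemma q_zero : q 0 = 0 := by simp [q_apply]

lemma q_smul (r : ℝ) (x : SplitOct) : q (r • x) = r^2 * q x := by
  rw [← polar_self, polar_smul_left, polar_smul_right, polar_self]; ring

lemma q_neg (x : SplitOct) : q (-x) = q x := by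
  rw [← neg_one_smul ℝ x, q_smul]; ring

lemma cross_neg_right (x y : SplitOct) : cross x (-y) = -cross x y := by
  rw [← neg_one_smul ℝ y, cross_smul_right, neg_one_smul]

lemma cross_sub_right (x y y' : SplitOct) : cross x (y - y') = cross x y - cross x y' := by
  rw [sub_eq_add_neg, cross_add_right, cross_neg_right, sub_eq_add_neg]

lemma mem_orth_iff {P : Submodule ℝ SplitOct} {x : SplitOct} :
    x ∈ orth P ↔ x ∈ Im ∧ ∀ y ∈ P, polar x y = 0 := Iff.rfl

lemma cross_mem_orth {P : Submodule ℝ SplitOct} (hPIm : P ≤ Im)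
    (hPcross : ∀ u ∈ P, ∀ v ∈ P, cross u v ∈ P)
    {u v : SplitOct} (hu : u ∈ P) (hv : v ∈ orth P) : cross u v ∈ orth P := by
  rw [mem_orth_iff] at hv ⊢
  refine ⟨cross_mem_Im u v, fun y hy => ?_⟩
  have h1 : triple u v y = triple y u v :=
    triple_cyclic u v y (hPIm hu) hv.1 (hPIm hy)
  have h2 : triple y u v = 0 := by
    rw [triple, polar_comm]
    exact hv.2 _ (hPcross y hy u hu)
  rw [triple] at h1
  rw [h1, h2]

lemma mem_inf_orth_eq_zero {P : Submodule ℝ SplitOct}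
    (hPpos : ∀ v ∈ P, v ≠ 0 → 0 < q v) {z : SplitOct}
    (hz : z ∈ P) (hz' : z ∈ orth P) : z = 0 := by
  by_contra hne
  have h1 := hPpos z hz hne
  have h2 : q z = 0 := by rw [← polar_self]; exact hz'.2 z hz
  linarith

/-- The polarization as a bilinear form. -/
def polarForm : LinearMap.BilinForm ℝ SplitOct :=
  LinearMap.mk₂ ℝ polar polar_add_left polar_smul_left polar_add_right polar_smul_right

lemma polarForm_apply (x y : SplitOct) : polarForm x y = polar x y := rfl

lemma polarForm_refl : polarForm.IsRefl := by
  intro x y h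
  rw [polarForm_apply] at h ⊢
  rw [polar_comm]; exact h

lemma exists_decomp {P : Submodule ℝ SplitOct} (hPIm : P ≤ Im)
    (hPpos : ∀ v ∈ P, v ≠ 0 → 0 < q v) :
    ∀ x ∈ Im, ∃ p ∈ P, ∃ w ∈ orth P, x = p + w := by
  have hnd : (polarForm.restrict P).Nondegenerate := by
    refine (LinearMap.IsRefl.nondegenerate_iff_separatingLeft
      (B := polarForm.restrict P) (fun x y h => polarForm_refl (x : SplitOct) y h)).2 ?_
    intro m hm
    have h1 : q (m : SplitOct) = 0 := by
      have h0 := hm m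
      rwa [show ((polarForm.restrict P) m) m = polar (m : SplitOct) m from rfl,
        polar_self] at h0
    by_contra hne
    have hmne : (m : SplitOct) ≠ 0 := fun h => hne (Subtype.ext h)
    exact absurd h1 (hPpos m m.2 hmne).ne'
  have hc := LinearMap.BilinForm.isCompl_orthogonal_of_restrict_nondegenerate
    polarForm_refl hnd
  intro x hx
  have hmem : x ∈ P ⊔ polarForm.orthogonal P := by rw [hc.sup_eq_top]; trivial
  obtain ⟨p, hp, w, hw, rfl⟩ := Submodule.mem_sup.1 hmem
  refine ⟨p, hp, w, ⟨?_, fun y hy => ?_⟩, rfl⟩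
  · have h2 : p + w - p ∈ Im := Im.sub_mem hx (hPIm hp)
    simpa using h2
  · rw [polar_comm]
    exact hw y hy

lemma quat_cs (b c : ℍ[ℝ]) : ((b * star c).re)^2 ≤ normSq b * normSq c := by
  simp only [Quaternion.re_mul, Quaternion.re_star, Quaternion.imI_star, Quaternion.imJ_star,
    Quaternion.imK_star, Quaternion.normSq_def']
  nlinarith [sq_nonneg (b.re*c.imI - b.imI*c.re), sq_nonneg (b.re*c.imJ - b.imJ*c.re),
    sq_nonneg (b.re*c.imK - b.imK*c.re), sq_nonneg (b.imI*c.imJ - b.imJ*c.imI),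
    sq_nonneg (b.imI*c.imK - b.imK*c.imI), sq_nonneg (b.imJ*c.imK - b.imK*c.imJ)]

lemma orth_isotropic_eq_zero {P : Submodule ℝ SplitOct} (hPIm : P ≤ Im)
    (hPdim : Module.finrank ℝ P = 3)
    (hPpos : ∀ v ∈ P, v ≠ 0 → 0 < q v) :
    ∀ n ∈ orth P, q n = 0 → n = 0 := by
  intro n hn hqn
  by_cases ha : n.1 = 0
  · have h2 := q_apply n
    rw [hqn, ha] at h2
    simp at h2
    exact Prod.ext ha h2
  · exfalso
    set f := (LinearMap.fst ℝ ℍ[ℝ] ℍ[ℝ]).domRestrict P with hf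
    have hker : LinearMap.ker f = ⊥ := by
      rw [eq_bot_iff]
      rintro ⟨x, hx⟩ hfx
      have h1 : x.1 = 0 := hfx
      have h2 : x = 0 := by
        by_contra hne
        have h3 := hPpos x hx hne
        have h4 : q x ≤ 0 := by
          rw [q_apply, h1]
          simp [Quaternion.normSq_nonneg]
        linarith
      simpa using h2
    have hrange : Module.finrank ℝ (LinearMap.range f) = 3 := by
      have h1 := LinearMap.finrank_range_add_finrank_ker f
      rw [hker, finrank_bot, hPdim] at h1
      omega
    have hVdim : Module.finrank ℝ
        (LinearMap.ker (QuaternionAlgebra.reₗ (-1 : ℝ) 0 (-1))) = 3 := by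
      have h1 := LinearMap.finrank_range_add_finrank_ker (QuaternionAlgebra.reₗ (-1 : ℝ) 0 (-1))
      have h2 : LinearMap.range (QuaternionAlgebra.reₗ (-1 : ℝ) 0 (-1)) = ⊤ := by
        rw [LinearMap.range_eq_top]
        intro r
        exact ⟨(r : ℍ[ℝ]), Quaternion.re_coe r⟩
      rw [h2, finrank_top, QuaternionAlgebra.finrank_eq_four, Module.finrank_self] at h1
      omega
    have hle : LinearMap.range f ≤ LinearMap.ker (QuaternionAlgebra.reₗ (-1 : ℝ) 0 (-1)) := by
      rintro _ ⟨⟨x, hx⟩, rfl⟩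
      exact mem_Im_iff_re.1 (hPIm hx)
    have heq : LinearMap.range f = LinearMap.ker (QuaternionAlgebra.reₗ (-1 : ℝ) 0 (-1)) :=
      by
      refine @Submodule.eq_of_le_of_finrank_le _ _ _ _ _ _ _ ?_ hle
        (le_of_eq (hVdim.trans hrange.symm))
      haveI : FiniteDimensional ℝ ℍ[ℝ] :=
        Module.finite_of_finrank_pos (by rw [Quaternion.finrank_eq_four]; norm_num)
      exact @FiniteDimensional.finiteDimensional_submodule _ _ _ _ _ this _
    have hn1 : n.1 ∈ LinearMap.range f := by
      rw [heq]
      exact mem_Im_iff_re.1 hn.1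
    obtain ⟨⟨p, hp⟩, hp1⟩ := hn1
    have hp1' : p.1 = n.1 := hp1
    have hpne : p ≠ 0 := by
      intro h
      rw [h] at hp1'
      exact ha hp1'.symm
    have hqp := hPpos p hp hpne
    have hpol : polar n p = 0 := hn.2 p hp
    have hA : (0 : ℝ) < normSq n.1 :=
      lt_of_le_of_ne (Quaternion.normSq_nonneg) (Ne.symm (Quaternion.normSq_ne_zero.2 ha))
    have h1 : normSq n.2 = normSq n.1 := by
      have := q_apply n
      rw [hqn] at this
      linarith
    have h2 : normSq p.2 < normSq n.1 := by
      have := q_apply p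
      rw [hp1'] at this
      linarith
    have h3 : (n.2 * star p.2).re = normSq n.1 := by
      have h4 := polar_apply n p
      rw [hpol, hp1'] at h4
      have h5 : (n.1 * star n.1).re = normSq n.1 := by
        simp only [Quaternion.re_mul, Quaternion.re_star, Quaternion.imI_star,
          Quaternion.imJ_star, Quaternion.imK_star, Quaternion.normSq_def']
        ring
      linarith
    have hcs := quat_cs n.2 p.2
    rw [h3, h1] at hcs
    have h6 : normSq n.1 * normSq p.2 < normSq n.1 * normSq n.1 :=
      mul_lt_mul_of_pos_left h2 hA
    have h7 : (normSq n.1 : ℝ)^2 = normSq n.1 * normSq n.1 := sq (normSq n.1)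
    linarith
/-- For a spacelike cross-closed 3-plane `P`, the map
`([u], v) ↦ ℝ(u + u×v)`, for `[u]` a line in `P` with unit representative `u` and `v ∈ P⊥`
with `q v = -1`, is well defined and a bijection from `{lines in P} × {v ∈ P⊥ : q v = -1}`
onto the set of isotropic lines of `Im 𝕆'`. -/
theorem isotropic_lines_bijection
    (P : Submodule ℝ SplitOct) (hPIm : P ≤ Im)
    (hPdim : Module.finrank ℝ P = 3)
    (hPpos : ∀ v ∈ P, v ≠ 0 → 0 < q v)
    (hPcross : ∀ u ∈ P, ∀ v ∈ P, cross u v ∈ P) :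
    (∀ u u' v : SplitOct, u ∈ P → u' ∈ P → q u = 1 → q u' = 1 →
      Submodule.span ℝ {u} = Submodule.span ℝ {u'} →
      v ∈ orth P → q v = -1 →
      Submodule.span ℝ {u + cross u v} = Submodule.span ℝ {u' + cross u' v}) ∧
    (∀ u v : SplitOct, u ∈ P → q u = 1 → v ∈ orth P → q v = -1 →
      IsIsotropicLine (Submodule.span ℝ {u + cross u v})) ∧
    ∀ ℓ : Submodule ℝ SplitOct, IsIsotropicLine ℓ →
      ∃! p : Submodule ℝ SplitOct × SplitOct,
        p.2 ∈ orth P ∧ q p.2 = -1 ∧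
          ∃ u : SplitOct, u ∈ P ∧ q u = 1 ∧ p.1 = Submodule.span ℝ {u} ∧
            Submodule.span ℝ {u + cross u p.2} = ℓ := by
  have hmemP : ∀ {z : SplitOct}, z ∈ P → z ∈ Im := fun hz => hPIm hz
  constructor
  · -- well-definedness
    intro u u' v hu hu' hqu hqu' hspan hv hqv
    have h1 : u' ∈ Submodule.span ℝ {u} := hspan ▸ Submodule.mem_span_singleton_self u'
    obtain ⟨c, rfl⟩ := Submodule.mem_span_singleton.1 h1
    have hc2 : c ^ 2 = 1 := by
      rw [q_smul, hqu, mul_one] at hqu'; exact hqu'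
    have hcne : c ≠ 0 := by
      intro h; rw [h] at hc2; norm_num at hc2
    rw [cross_smul_left, ← smul_add]
    exact (Submodule.span_singleton_smul_eq (isUnit_iff_ne_zero.2 hcne) _).symm
  constructor
  · -- isotropy
    intro u v hu hqu hv hqv
    have huIm : u ∈ Im := hPIm hu
    have hvIm : v ∈ Im := hv.1
    have hpuv : polar u v = 0 := by rw [polar_comm]; exact hv.2 u hu
    have hx : q (u + cross u v) = 0 := by
      rw [q_add, q_cross u v huIm hvIm, hqu, hqv, polar_comm u (cross u v),
        polar_cross_left u v huIm hvIm, hpuv]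
      ring
    have hne : u + cross u v ≠ 0 := by
      intro h
      have h2 : polar (u + cross u v) u = 1 := by
        rw [polar_add_left, polar_self, hqu, polar_cross_left u v huIm hvIm]; ring
      rw [h, polar_zero_left] at h2
      norm_num at h2
    exact ⟨u + cross u v, Im.add_mem huIm (cross_mem_Im u v), hne, hx, rfl⟩
  · -- bijectivity onto isotropic lines
    intro ℓ hℓ
    obtain ⟨x₀, hx₀Im, hx₀ne, hx₀q, rfl⟩ := hℓ
    obtain ⟨p, hp, n0, hn0, hxpn⟩ := exists_decomp hPIm hPpos x₀ hx₀Im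
    have hppolar : polar p n0 = 0 := by rw [polar_comm]; exact hn0.2 p hp
    have hqsum : q p + q n0 = 0 := by
      have h1 := q_add p n0
      rw [← hxpn, hx₀q] at h1
      linarith [h1, hppolar]
    have hpne : p ≠ 0 := by
      rintro rfl
      rw [zero_add] at hxpn
      subst hxpn
      exact hx₀ne (orth_isotropic_eq_zero hPIm hPdim hPpos x₀ hn0 hx₀q)
    have hqp : 0 < q p := hPpos p hp hpne
    set r := Real.sqrt (q p) with hrdef
    have hr : 0 < r := Real.sqrt_pos.2 hqp
    have hr2 : r ^ 2 = q p := Real.sq_sqrt hqp.le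
    set u := r⁻¹ • p with hudef
    set m := r⁻¹ • n0 with hmdef
    have hu : u ∈ P := P.smul_mem _ hp
    have hqu : q u = 1 := by
      rw [hudef, q_smul, ← hr2]
      field_simp
    have hm : m ∈ orth P := (orth P).smul_mem _ hn0
    have hqm : q m = -1 := by
      rw [hmdef, q_smul]
      have : q n0 = -q p := by linarith
      rw [this, ← hr2]
      field_simp
    have hpum : polar u m = 0 := by rw [polar_comm]; exact hm.2 u hu
    set v := -cross u m with hvdef
    have hv : v ∈ orth P := (orth P).neg_mem (cross_mem_orth hPIm hPcross hu hm)
    have hqv : q v = -1 := by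
      rw [hvdef, q_neg, q_cross u m (hPIm hu) hm.1, hqu, hqm, hpum]
      ring
    have hcuv : cross u v = m := by
      rw [hvdef, cross_neg_right, cross_cross_self u m (hPIm hu) hm.1, hpum, hqu]
      simp
    have hx₀eq : x₀ = r • (u + m) := by
      rw [hudef, hmdef, ← smul_add, smul_smul]
      rw [mul_inv_cancel₀ hr.ne', one_smul, hxpn]
    have hspan : Submodule.span ℝ {u + cross u v} = Submodule.span ℝ {x₀} := by
      rw [hcuv, hx₀eq]
      exact (Submodule.span_singleton_smul_eq (isUnit_iff_ne_zero.2 hr.ne') _).symm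
    refine ⟨(Submodule.span ℝ {u}, v), ⟨hv, hqv, u, hu, hqu, rfl, hspan⟩, ?_⟩
    rintro ⟨ℓ₁, v'⟩ ⟨hv', hqv', u', hu', hqu', rfl, hsp'⟩
    have hx' : u' + cross u' v' ∈ Submodule.span ℝ {x₀} :=
      hsp' ▸ Submodule.mem_span_singleton_self _
    obtain ⟨c, hc⟩ := Submodule.mem_span_singleton.1 hx'
    set s := c * r with hsdef
    have hsum : u' + cross u' v' = s • u + s • m := by
      rw [← hc, hx₀eq, smul_smul, hsdef, smul_add]
    have hcross' : cross u' v' ∈ orth P := cross_mem_orth hPIm hPcross hu' hv'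
    have hz : u' - s • u = 0 ∧ cross u' v' - s • m = 0 := by
      have hzP : u' - s • u ∈ P := P.sub_mem hu' (P.smul_mem _ hu)
      have hzO : u' - s • u ∈ orth P := by
        have h1 : u' - s • u = s • m - cross u' v' := by
          have := hsum; abel_nf; abel_nf at this
          linear_combination (norm := module) this
        rw [h1]
        exact (orth P).sub_mem ((orth P).smul_mem _ hm) hcross'
      have h2 : u' - s • u = 0 := mem_inf_orth_eq_zero hPpos hzP hzO
      refine ⟨h2, ?_⟩
      have h4 : u' = s • u := by rwa [sub_eq_zero] at h2
      have h5 : cross u' v' = (u' + cross u' v') - u' := by abel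
      rw [hsum] at h5
      rw [h5, h4]
      abel
    have hu'eq : u' = s • u := by rw [← sub_eq_zero]; exact hz.1
    have hcv'eq : cross u' v' = s • m := by rw [← sub_eq_zero]; exact hz.2
    have hs2 : s ^ 2 = 1 := by
      rw [hu'eq, q_smul, hqu, mul_one] at hqu'
      exact hqu'
    have hsne : s ≠ 0 := by intro h; rw [h] at hs2; norm_num at hs2
    have hcuv' : cross u v' = m := by
      rw [hu'eq, cross_smul_left] at hcv'eq
      have := smul_right_injective SplitOct hsne hcv'eq
      exact this
    have hvv : v' = v := by
      have hdiff : cross u (v' - v) = 0 := by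
        rw [cross_sub_right, hcuv', hcuv, sub_self]
      have hdo : v' - v ∈ orth P := (orth P).sub_mem hv' hv
      have hpd : polar u (v' - v) = 0 := by rw [polar_comm]; exact hdo.2 u hu
      have h5 := cross_cross_self u (v' - v) (hPIm hu) hdo.1
      rw [hdiff, cross_zero_right, hpd, hqu] at h5
      have h6 : v' - v = 0 := by
        have := h5
        simp only [zero_smul, one_smul, zero_sub] at this
        rw [← neg_eq_zero, this]
      rw [← sub_eq_zero]; exact h6
    have huu : Submodule.span ℝ {u'} = Submodule.span ℝ {u} := by
      rw [hu'eq]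
      exact Submodule.span_singleton_smul_eq (isUnit_iff_ne_zero.2 hsne) _
    exact Prod.ext huu hvv

end SplitOct
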